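/- Any pregroupoid homomorphism φ from a pregroupoid X on A, B to the underlying pregroupoid of a groupoid G extends uniquely to a functor φ̄ : X⁺ → G from the enveloping groupoid, with φ̄ ∘ η = φ, where φ̄(x⁻¹) = φ(x)⁻¹, φ̄(xz⁻¹) = φ(x) ∘ φ(z)⁻¹, φ̄(x⁻¹z) = φ(x)⁻¹ ∘ φ(z). -/

import Mathlib

namespace Kock

/-- A pregroupoid on `A`, `B`: an inhabited type `X` with surjections `α`, `β` and a
partial ternary operation `op y x z` (meaning `y x⁻¹ z`), defined whenever
`β x = β y` and `α x = α z`; partiality is encoded by proof arguments, and the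
axioms are quantified over all proofs of the book-keeping conditions. -/
structure Pregroupoid (A B X : Type*) : Type _ where
  α : X → A
  β : X → B
  nonempty : Nonempty X
  α_surj : Function.Surjective α
  β_surj : Function.Surjective β
  op : (y x z : X) → β x = β y → α x = α z → X
  α_op : ∀ (y x z : X) (h1 : β x = β y) (h2 : α x = α z), α (op y x z h1 h2) = α y
  β_op : ∀ (y x z : X) (h1 : β x = β y) (h2 : α x = α z), β (op y x z h1 h2) = β z
  U1 : ∀ (x z : X) (h1 : β x = β x) (h2 : α x = α z), op x x z h1 h2 = z
  U2 : ∀ (y x : X) (h1 : β x = β y) (h2 : α x = α x), op y x x h1 h2 = y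
  G1 : ∀ (v y x z : X) (h1 : β x = β y) (h2 : α x = α z) (h3 : β y = β v)
      (h4 : α y = α (op y x z h1 h2)) (h5 : β x = β v),
      op v y (op y x z h1 h2) h3 h4 = op v x z h5 h2
  G2 : ∀ (y x z w : X) (h1 : β x = β y) (h2 : α x = α z)
      (h3 : β z = β (op y x z h1 h2)) (h4 : α z = α w) (h5 : α x = α w),
      op (op y x z h1 h2) z w h3 h4 = op y x w h1 h5


/-- Horizontal pairs: pairs `(x, y)` with `β x = β y`; the class of `(x,y)`
is the fraction `yx⁻¹`. -/
def HPair {A B X : Type*} (P : Pregroupoid A B X) : Type _ :=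
  {p : X × X // P.β p.1 = P.β p.2}

/-- `(x, y) ≅ₕ (z, u)` iff `α x = α z` and `u = yx⁻¹z`. -/
def hRel {A B X : Type*} (P : Pregroupoid A B X) (p q : HPair P) : Prop :=
  ∃ h : P.α p.val.1 = P.α q.val.1,
    q.val.2 = P.op p.val.2 p.val.1 q.val.1 p.prop h

/-- Vertical pairs: pairs `(x, z)` with `α x = α z`; the class of `(x,z)`
is the fraction `x⁻¹z`. -/
def VPair {A B X : Type*} (P : Pregroupoid A B X) : Type _ :=
  {p : X × X // P.α p.1 = P.α p.2}

/-- `(x, z) ≅ᵥ (y, u)` iff `β x = β y` and `u = yx⁻¹z`. -/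
def vRel {A B X : Type*} (P : Pregroupoid A B X) (p q : VPair P) : Prop :=
  ∃ h : P.β p.val.1 = P.β q.val.1,
    q.val.2 = P.op q.val.1 p.val.1 p.val.2 h p.prop

/-- `XX⁻¹`: fractions `yx⁻¹`, the classes of horizontal pairs. -/
def XXinv {A B X : Type*} (P : Pregroupoid A B X) : Type _ := Quot (hRel P)

/-- `X⁻¹X`: fractions `x⁻¹z`, the classes of vertical pairs. -/
def XinvX {A B X : Type*} (P : Pregroupoid A B X) : Type _ := Quot (vRel P)

/-- The arrows of the enveloping groupoid `X⁺`: the four disjoint pieces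
`X⁺(A,A) = XX⁻¹`, `X⁺(B,B) = X⁻¹X`, `X⁺(A,B) = X` and `X⁺(B,A) = X⁻¹`
(a formal copy of `X`). -/
inductive Arr {A B X : Type*} (P : Pregroupoid A B X) : Type _
  | aa : XXinv P → Arr P
  | bb : XinvX P → Arr P
  | ab : X → Arr P
  | ba : X → Arr P

/-- The fraction `yx⁻¹`, as an arrow of `X⁺`. -/
def mkAA {A B X : Type*} (P : Pregroupoid A B X) (y x : X)
    (h : P.β x = P.β y) : Arr P :=
  .aa (Quot.mk _ ⟨(x, y), h⟩)

/-- The fraction `x⁻¹z`, as an arrow of `X⁺`. -/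
def mkBB {A B X : Type*} (P : Pregroupoid A B X) (x z : X)
    (h : P.α x = P.α z) : Arr P :=
  .bb (Quot.mk _ ⟨(x, z), h⟩)

/-- `x ∈ X = X⁺(A,B)`, as an arrow of `X⁺`. -/
def mkAB {A B X : Type*} (P : Pregroupoid A B X) (x : X) : Arr P := .ab x

/-- `x⁻¹ ∈ X⁻¹ = X⁺(B,A)`, as an arrow of `X⁺`. -/
def mkBA {A B X : Type*} (P : Pregroupoid A B X) (x : X) : Arr P := .ba x

/-- The domain book-keeping map of `X⁺`, with values in `A ⊔ B`. -/
def d0 {A B X : Type*} (P : Pregroupoid A B X) : Arr P → A ⊕ B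
  | .aa c => Sum.inl (Quot.lift (fun p => P.α p.val.2)
      (fun p q => by rintro ⟨h, hq⟩; show P.α p.val.2 = P.α q.val.2; rw [hq, P.α_op]) c)
  | .bb c => Sum.inr (Quot.lift (fun p => P.β p.val.1)
      (fun p q => by rintro ⟨h, hq⟩; exact h) c)
  | .ab x => Sum.inl (P.α x)
  | .ba x => Sum.inr (P.β x)

/-- The codomain book-keeping map of `X⁺`, with values in `A ⊔ B`. -/
def d1 {A B X : Type*} (P : Pregroupoid A B X) : Arr P → A ⊕ B
  | .aa c => Sum.inl (Quot.lift (fun p => P.α p.val.1)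
      (fun p q => by rintro ⟨h, hq⟩; exact h) c)
  | .bb c => Sum.inr (Quot.lift (fun p => P.β p.val.2)
      (fun p q => by rintro ⟨h, hq⟩; show P.β p.val.2 = P.β q.val.2; rw [hq, P.β_op]) c)
  | .ab x => Sum.inr (P.β x)
  | .ba x => Sum.inl (P.α x)

/-- The hom-sets of the enveloping groupoid `X⁺`, over the object set `A ⊔ B`. -/
def EnvHom {A B X : Type*} (P : Pregroupoid A B X) (a b : A ⊕ B) : Type _ :=
  {f : Arr P // d0 P f = a ∧ d1 P f = b}

/-- A groupoid structure on a family of hom-sets: identities, composition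
(written from left to right), inverses, and the groupoid laws. -/
structure GroupoidStructure {Obj : Type*} (Hom : Obj → Obj → Type*) where
  ident : ∀ a, Hom a a
  comp : ∀ {a b c}, Hom a b → Hom b c → Hom a c
  inv : ∀ {a b}, Hom a b → Hom b a
  id_comp : ∀ {a b} (f : Hom a b), comp (ident a) f = f
  comp_id : ∀ {a b} (f : Hom a b), comp f (ident b) = f
  assoc : ∀ {a b c d} (f : Hom a b) (g : Hom b c) (h : Hom c d),
    comp (comp f g) h = comp f (comp g h)
  inv_comp : ∀ {a b} (f : Hom a b), comp (inv f) f = ident b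
  comp_inv : ∀ {a b} (f : Hom a b), comp f (inv f) = ident a

/-- The multiplication table of the enveloping groupoid `X⁺`, together with the
description of its identities: composition (left to right) of the four kinds of
arrows is given by `x₁x₂⁻¹ ∘ x₃x₄⁻¹ = (x₁x₂⁻¹x₃)x₄⁻¹`, `x₁x₂⁻¹ ∘ x₃ = x₁x₂⁻¹x₃`,
`x₁ ∘ x₂⁻¹ = x₁x₂⁻¹`, `x₁ ∘ x₂⁻¹x₃ = x₁x₂⁻¹x₃`, `x₃⁻¹ ∘ x₂x₁⁻¹ = (x₁x₂⁻¹x₃)⁻¹`,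
`x₂⁻¹ ∘ x₃ = x₂⁻¹x₃`, `x₃⁻¹x₂ ∘ x₁⁻¹ = (x₁x₂⁻¹x₃)⁻¹`,
`x₂⁻¹x₃ ∘ x₄⁻¹x₅ = x₂⁻¹(x₃x₄⁻¹x₅)`, and the identity at `α x` is `xx⁻¹`,
the identity at `β x` is `x⁻¹x`. -/
def TableSpec {A B X : Type*} (P : Pregroupoid A B X)
    (str : GroupoidStructure (EnvHom P)) : Prop :=
  (∀ (a b c : A ⊕ B) (f : EnvHom P a b) (g : EnvHom P b c)
    (x1 x2 x3 x4 : X) (h12 : P.β x2 = P.β x1) (h34 : P.β x4 = P.β x3)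
    (h23 : P.α x2 = P.α x3) (hu : P.β x4 = P.β (P.op x1 x2 x3 h12 h23)),
    f.val = mkAA P x1 x2 h12 → g.val = mkAA P x3 x4 h34 →
    (str.comp f g).val = mkAA P (P.op x1 x2 x3 h12 h23) x4 hu) ∧
  (∀ (a b c : A ⊕ B) (f : EnvHom P a b) (g : EnvHom P b c)
    (x1 x2 x3 : X) (h12 : P.β x2 = P.β x1) (h23 : P.α x2 = P.α x3),
    f.val = mkAA P x1 x2 h12 → g.val = mkAB P x3 →
    (str.comp f g).val = mkAB P (P.op x1 x2 x3 h12 h23)) ∧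
  (∀ (a b c : A ⊕ B) (f : EnvHom P a b) (g : EnvHom P b c)
    (x1 x2 : X) (h : P.β x2 = P.β x1),
    f.val = mkAB P x1 → g.val = mkBA P x2 →
    (str.comp f g).val = mkAA P x1 x2 h) ∧
  (∀ (a b c : A ⊕ B) (f : EnvHom P a b) (g : EnvHom P b c)
    (x1 x2 x3 : X) (h12 : P.β x2 = P.β x1) (h23 : P.α x2 = P.α x3),
    f.val = mkAB P x1 → g.val = mkBB P x2 x3 h23 →
    (str.comp f g).val = mkAB P (P.op x1 x2 x3 h12 h23)) ∧
  (∀ (a b c : A ⊕ B) (f : EnvHom P a b) (g : EnvHom P b c)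
    (x1 x2 x3 : X) (h12 : P.β x2 = P.β x1) (h23 : P.α x2 = P.α x3),
    f.val = mkBA P x3 → g.val = mkAA P x2 x1 h12.symm →
    (str.comp f g).val = mkBA P (P.op x1 x2 x3 h12 h23)) ∧
  (∀ (a b c : A ⊕ B) (f : EnvHom P a b) (g : EnvHom P b c)
    (x2 x3 : X) (h23 : P.α x2 = P.α x3),
    f.val = mkBA P x2 → g.val = mkAB P x3 →
    (str.comp f g).val = mkBB P x2 x3 h23) ∧
  (∀ (a b c : A ⊕ B) (f : EnvHom P a b) (g : EnvHom P b c)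
    (x1 x2 x3 : X) (h12 : P.β x2 = P.β x1) (h23 : P.α x2 = P.α x3),
    f.val = mkBB P x3 x2 h23.symm → g.val = mkBA P x1 →
    (str.comp f g).val = mkBA P (P.op x1 x2 x3 h12 h23)) ∧
  (∀ (a b c : A ⊕ B) (f : EnvHom P a b) (g : EnvHom P b c)
    (x2 x3 x4 x5 : X) (h23 : P.α x2 = P.α x3) (h43 : P.β x4 = P.β x3)
    (h45 : P.α x4 = P.α x5) (hq : P.α x2 = P.α (P.op x3 x4 x5 h43 h45)),
    f.val = mkBB P x2 x3 h23 → g.val = mkBB P x4 x5 h45 →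
    (str.comp f g).val = mkBB P x2 (P.op x3 x4 x5 h43 h45) hq) ∧
  (∀ (x : X) (a : A ⊕ B), a = Sum.inl (P.α x) →
    (str.ident a).val = mkAA P x x rfl) ∧
  (∀ (x : X) (b : A ⊕ B), b = Sum.inr (P.β x) →
    (str.ident b).val = mkBB P x x rfl)

open CategoryTheory in
/-- A functor from the enveloping groupoid `X⁺` (presented by a groupoid
structure `str` on its hom-sets) to a groupoid `C`. -/
structure EnvFunctor {A B X : Type*} (P : Pregroupoid A B X)
    (str : GroupoidStructure (EnvHom P)) (C : Type*) [Groupoid C] where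
  obj : A ⊕ B → C
  map : ∀ {a b : A ⊕ B}, EnvHom P a b → (obj a ⟶ obj b)
  map_ident : ∀ a, map (str.ident a) = 𝟙 (obj a)
  map_comp : ∀ {a b c : A ⊕ B} (f : EnvHom P a b) (g : EnvHom P b c),
    map (str.comp f g) = map f ≫ map g

section Aux

open CategoryTheory

variable {A B X : Type*} (P : Pregroupoid A B X)
variable {C : Type*} [Groupoid C]
variable (φ0 : A → C) (φ1 : B → C) (φ : ∀ x : X, φ0 (P.α x) ⟶ φ1 (P.β x))

/-- The compatibility condition of a pregroupoid homomorphism. -/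
def Compat : Prop :=
  ∀ (y x z : X) (h1 : P.β x = P.β y) (h2 : P.α x = P.α z),
      φ (P.op y x z h1 h2)
        = eqToHom (congrArg φ0 (P.α_op y x z h1 h2)) ≫ φ y
          ≫ eqToHom (congrArg φ1 h1.symm) ≫ Groupoid.inv (φ x)
          ≫ eqToHom (congrArg φ0 h2) ≫ φ z
          ≫ eqToHom (congrArg φ1 (P.β_op y x z h1 h2).symm)

lemma aaSound (hφ : Compat P φ0 φ1 φ) (p q : HPair P) (hr : hRel P p q) :
    HEq (φ p.val.2 ≫ eqToHom (congrArg φ1 p.prop.symm) ≫ Groupoid.inv (φ p.val.1))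
        (φ q.val.2 ≫ eqToHom (congrArg φ1 q.prop.symm) ≫ Groupoid.inv (φ q.val.1)) := by
  obtain ⟨⟨p1, p2⟩, hp⟩ := p
  obtain ⟨⟨q1, q2⟩, hq2⟩ := q
  obtain ⟨h, hq⟩ := hr
  have hp' : P.β p1 = P.β p2 := hp
  have h' : P.α p1 = P.α q1 := h
  have hq' : q2 = P.op p2 p1 q1 hp' h' := hq
  subst hq'
  show HEq (φ p2 ≫ eqToHom (congrArg φ1 hp'.symm) ≫ Groupoid.inv (φ p1))
      (φ (P.op p2 p1 q1 hp' h') ≫ eqToHom (congrArg φ1 (P.β_op p2 p1 q1 hp' h'))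
        ≫ Groupoid.inv (φ q1))
  refine (conj_eqToHom_iff_heq _ _
    (congrArg φ0 (P.α_op p2 p1 q1 hp' h').symm)
    (congrArg φ0 h')).mp ?_
  rw [hφ]
  simp [Groupoid.inv_eq_inv, eqToHom_trans]

lemma bbSound (hφ : Compat P φ0 φ1 φ) (p q : VPair P) (hr : vRel P p q) :
    HEq (Groupoid.inv (φ p.val.1) ≫ eqToHom (congrArg φ0 p.prop) ≫ φ p.val.2)
        (Groupoid.inv (φ q.val.1) ≫ eqToHom (congrArg φ0 q.prop) ≫ φ q.val.2) := by
  obtain ⟨⟨p1, p2⟩, hp⟩ := p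
  obtain ⟨⟨q1, q2⟩, hq2⟩ := q
  obtain ⟨h, hq⟩ := hr
  have hp' : P.α p1 = P.α p2 := hp
  have h' : P.β p1 = P.β q1 := h
  have hq' : q2 = P.op q1 p1 p2 h' hp' := hq
  subst hq'
  show HEq (Groupoid.inv (φ p1) ≫ eqToHom (congrArg φ0 hp') ≫ φ p2)
      (Groupoid.inv (φ q1) ≫ eqToHom (congrArg φ0 (P.α_op q1 p1 p2 h' hp').symm)
        ≫ φ (P.op q1 p1 p2 h' hp'))
  refine (conj_eqToHom_iff_heq _ _
    (congrArg φ1 h')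
    (congrArg φ1 (P.β_op q1 p1 p2 h' hp').symm)).mp ?_
  rw [hφ]
  simp [Groupoid.inv_eq_inv, eqToHom_trans]

/-- The arrow part of the extension `φ̄`, on raw arrows of `X⁺`. -/
def Fmap0 (hφ : Compat P φ0 φ1 φ) : ∀ f : Arr P, Sum.elim φ0 φ1 (d0 P f) ⟶ Sum.elim φ0 φ1 (d1 P f)
  | .ab x => φ x
  | .ba x => Groupoid.inv (φ x)
  | .aa c => Quot.hrecOn
      (motive := fun c => Sum.elim φ0 φ1 (d0 P (Arr.aa c)) ⟶ Sum.elim φ0 φ1 (d1 P (Arr.aa c))) c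
      (fun p => (φ p.val.2 ≫ eqToHom (congrArg φ1 p.prop.symm) ≫ Groupoid.inv (φ p.val.1) :
          φ0 (P.α p.val.2) ⟶ φ0 (P.α p.val.1)))
      (aaSound P φ0 φ1 φ hφ)
  | .bb c => Quot.hrecOn
      (motive := fun c => Sum.elim φ0 φ1 (d0 P (Arr.bb c)) ⟶ Sum.elim φ0 φ1 (d1 P (Arr.bb c))) c
      (fun p => (Groupoid.inv (φ p.val.1) ≫ eqToHom (congrArg φ0 p.prop) ≫ φ p.val.2 :
          φ1 (P.β p.val.1) ⟶ φ1 (P.β p.val.2)))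
      (bbSound P φ0 φ1 φ hφ)

/-- The arrow part of the extension `φ̄`, on hom-sets. -/
def Fmap (hφ : Compat P φ0 φ1 φ) {a b : A ⊕ B} (f : EnvHom P a b) : Sum.elim φ0 φ1 a ⟶ Sum.elim φ0 φ1 b :=
  eqToHom (congrArg (Sum.elim φ0 φ1) f.prop.1.symm) ≫ Fmap0 P φ0 φ1 φ hφ f.val
    ≫ eqToHom (congrArg (Sum.elim φ0 φ1) f.prop.2)

lemma Fmap0_mkAB (hφ : Compat P φ0 φ1 φ) (x : X) : Fmap0 P φ0 φ1 φ hφ (mkAB P x) = φ x := rfl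

lemma Fmap0_mkBA (hφ : Compat P φ0 φ1 φ) (x : X) : Fmap0 P φ0 φ1 φ hφ (mkBA P x) = Groupoid.inv (φ x) := rfl

lemma Fmap0_mkAA (hφ : Compat P φ0 φ1 φ) (y x : X) (h : P.β x = P.β y) :
    Fmap0 P φ0 φ1 φ hφ (mkAA P y x h)
      = (φ y ≫ eqToHom (congrArg φ1 h.symm) ≫ Groupoid.inv (φ x) :
          φ0 (P.α y) ⟶ φ0 (P.α x)) := rfl

lemma Fmap0_mkBB (hφ : Compat P φ0 φ1 φ) (x z : X) (h : P.α x = P.α z) :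
    Fmap0 P φ0 φ1 φ hφ (mkBB P x z h)
      = (Groupoid.inv (φ x) ≫ eqToHom (congrArg φ0 h) ≫ φ z :
          φ1 (P.β x) ⟶ φ1 (P.β z)) := rfl

lemma Fmap_spec (hφ : Compat P φ0 φ1 φ) {a b : A ⊕ B} (f : EnvHom P a b) (v : Arr P) (hv : f.val = v) :
    Fmap P φ0 φ1 φ hφ f
      = eqToHom (congrArg (Sum.elim φ0 φ1) (show a = d0 P v from hv ▸ f.prop.1.symm))
        ≫ Fmap0 P φ0 φ1 φ hφ v
        ≫ eqToHom (congrArg (Sum.elim φ0 φ1) (show d1 P v = b from hv ▸ f.prop.2)) := by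
  obtain ⟨w, h1, h2⟩ := f
  dsimp at hv
  subst hv
  rfl

lemma Fmap_AB (hφ : Compat P φ0 φ1 φ) {a b : A ⊕ B} (f : EnvHom P a b) (x : X)
    (hv : f.val = mkAB P x) (e0 : Sum.elim φ0 φ1 a = φ0 (P.α x))
    (e1 : φ1 (P.β x) = Sum.elim φ0 φ1 b) :
    Fmap P φ0 φ1 φ hφ f = eqToHom e0 ≫ φ x ≫ eqToHom e1 := by
  obtain ⟨w, h1, h2⟩ := f
  dsimp at hv
  subst hv
  rfl

lemma Fmap_BA (hφ : Compat P φ0 φ1 φ) {a b : A ⊕ B} (f : EnvHom P a b) (x : X)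
    (hv : f.val = mkBA P x) (e0 : Sum.elim φ0 φ1 a = φ1 (P.β x))
    (e1 : φ0 (P.α x) = Sum.elim φ0 φ1 b) :
    Fmap P φ0 φ1 φ hφ f = eqToHom e0 ≫ Groupoid.inv (φ x) ≫ eqToHom e1 := by
  obtain ⟨w, h1, h2⟩ := f
  dsimp at hv
  subst hv
  rfl

lemma Fmap_AA (hφ : Compat P φ0 φ1 φ) {a b : A ⊕ B} (f : EnvHom P a b) (y x : X)
    (h : P.β x = P.β y) (hv : f.val = mkAA P y x h) (e0 : Sum.elim φ0 φ1 a = φ0 (P.α y))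
    (e1 : φ0 (P.α x) = Sum.elim φ0 φ1 b) :
    Fmap P φ0 φ1 φ hφ f = eqToHom e0
      ≫ (φ y ≫ eqToHom (congrArg φ1 h.symm) ≫ Groupoid.inv (φ x)) ≫ eqToHom e1 := by
  obtain ⟨w, h1, h2⟩ := f
  dsimp at hv
  subst hv
  rfl

lemma Fmap_BB (hφ : Compat P φ0 φ1 φ) {a b : A ⊕ B} (f : EnvHom P a b) (x z : X)
    (h : P.α x = P.α z) (hv : f.val = mkBB P x z h) (e0 : Sum.elim φ0 φ1 a = φ1 (P.β x))
    (e1 : φ1 (P.β z) = Sum.elim φ0 φ1 b) :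
    Fmap P φ0 φ1 φ hφ f = eqToHom e0
      ≫ (Groupoid.inv (φ x) ≫ eqToHom (congrArg φ0 h) ≫ φ z) ≫ eqToHom e1 := by
  obtain ⟨w, h1, h2⟩ := f
  dsimp at hv
  subst hv
  rfl

end Aux

open CategoryTheory in
/-- Any pregroupoid homomorphism `φ = (φ₀, φ₁, φ)` from a
pregroupoid `X` on `A`, `B` to the underlying pregroupoid of a groupoid `C`
extends uniquely to a functor `φ̄ : X⁺ → C` from the enveloping groupoid with
`φ̄ ∘ η = φ` (i.e. `φ̄(x) = φ(x)` on `X = X⁺(A,B)`), and moreover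
`φ̄(x⁻¹) = φ(x)⁻¹`, `φ̄(yx⁻¹) = φ(y) ∘ φ(x)⁻¹` and `φ̄(x⁻¹z) = φ(x)⁻¹ ∘ φ(z)`
(composing from left to right). -/
theorem enveloping_groupoid_universal_property {A B X : Type*}
    (P : Pregroupoid A B X) (str : GroupoidStructure (EnvHom P))
    (hstr : TableSpec P str) (C : Type*) [Groupoid C]
    (φ0 : A → C) (φ1 : B → C) (φ : ∀ x : X, φ0 (P.α x) ⟶ φ1 (P.β x))
    (hφ : ∀ (y x z : X) (h1 : P.β x = P.β y) (h2 : P.α x = P.α z),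
      φ (P.op y x z h1 h2)
        = eqToHom (congrArg φ0 (P.α_op y x z h1 h2)) ≫ φ y
          ≫ eqToHom (congrArg φ1 h1.symm) ≫ Groupoid.inv (φ x)
          ≫ eqToHom (congrArg φ0 h2) ≫ φ z
          ≫ eqToHom (congrArg φ1 (P.β_op y x z h1 h2).symm)) :
    ∃! F : EnvFunctor P str C,
      (∀ a : A, F.obj (Sum.inl a) = φ0 a) ∧
      (∀ b : B, F.obj (Sum.inr b) = φ1 b) ∧
      (∀ x : X,
        HEq (F.map (⟨mkAB P x, rfl, rfl⟩ :
          EnvHom P (Sum.inl (P.α x)) (Sum.inr (P.β x)))) (φ x)) ∧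
      (∀ x : X,
        HEq (F.map (⟨mkBA P x, rfl, rfl⟩ :
          EnvHom P (Sum.inr (P.β x)) (Sum.inl (P.α x))))
          (Groupoid.inv (φ x))) ∧
      (∀ (y x : X) (h : P.β x = P.β y),
        HEq (F.map (⟨mkAA P y x h, rfl, rfl⟩ :
          EnvHom P (Sum.inl (P.α y)) (Sum.inl (P.α x))))
          (φ y ≫ eqToHom (congrArg φ1 h.symm) ≫ Groupoid.inv (φ x))) ∧
      (∀ (x z : X) (h : P.α x = P.α z),
        HEq (F.map (⟨mkBB P x z h, rfl, rfl⟩ :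
          EnvHom P (Sum.inr (P.β x)) (Sum.inr (P.β z))))
          (Groupoid.inv (φ x) ≫ eqToHom (congrArg φ0 h) ≫ φ z)) := by
  obtain ⟨hAA, hAAB, hABA, hABB, hBAA, hBAB, hBBA, hBB2, hidA, hidB⟩ := hstr
  have keyAB : ∀ x : X, Fmap P φ0 φ1 φ hφ
      (⟨mkAB P x, rfl, rfl⟩ : EnvHom P (Sum.inl (P.α x)) (Sum.inr (P.β x))) = φ x := by
    intro x; show eqToHom rfl ≫ φ x ≫ eqToHom rfl = φ x; simp [Fmap, Fmap0_mkAB]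
  have keyBA : ∀ x : X, Fmap P φ0 φ1 φ hφ
      (⟨mkBA P x, rfl, rfl⟩ : EnvHom P (Sum.inr (P.β x)) (Sum.inl (P.α x)))
        = Groupoid.inv (φ x) := by
    intro x; show eqToHom rfl ≫ Groupoid.inv (φ x) ≫ eqToHom rfl = Groupoid.inv (φ x); simp [Fmap, Fmap0_mkBA]
  have keyAA : ∀ (y x : X) (h : P.β x = P.β y), Fmap P φ0 φ1 φ hφ
      (⟨mkAA P y x h, rfl, rfl⟩ : EnvHom P (Sum.inl (P.α y)) (Sum.inl (P.α x)))
        = φ y ≫ eqToHom (congrArg φ1 h.symm) ≫ Groupoid.inv (φ x) := by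
    intro y x h; show eqToHom rfl ≫ (φ y ≫ eqToHom (congrArg φ1 h.symm) ≫ Groupoid.inv (φ x)) ≫ eqToHom rfl = φ y ≫ eqToHom (congrArg φ1 h.symm) ≫ Groupoid.inv (φ x); simp [Fmap, Fmap0_mkAA]
  have keyBB : ∀ (x z : X) (h : P.α x = P.α z), Fmap P φ0 φ1 φ hφ
      (⟨mkBB P x z h, rfl, rfl⟩ : EnvHom P (Sum.inr (P.β x)) (Sum.inr (P.β z)))
        = Groupoid.inv (φ x) ≫ eqToHom (congrArg φ0 h) ≫ φ z := by
    intro x z h; show eqToHom rfl ≫ (Groupoid.inv (φ x) ≫ eqToHom (congrArg φ0 h) ≫ φ z) ≫ eqToHom rfl = Groupoid.inv (φ x) ≫ eqToHom (congrArg φ0 h) ≫ φ z; simp [Fmap, Fmap0_mkBB]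
  refine ⟨⟨Sum.elim φ0 φ1, fun {a b} f => Fmap P φ0 φ1 φ hφ f, ?_, ?_⟩,
    ⟨fun a => rfl, fun b => rfl, fun x => heq_of_eq (keyAB x), fun x => heq_of_eq (keyBA x),
      fun y x h => heq_of_eq (keyAA y x h), fun x z h => heq_of_eq (keyBB x z h)⟩, ?_⟩
  · -- identities
    intro a
    show Fmap P φ0 φ1 φ hφ (str.ident a) = 𝟙 (Sum.elim φ0 φ1 a)
    rcases a with a | b
    · obtain ⟨x, rfl⟩ := P.α_surj a
      rw [Fmap_spec P φ0 φ1 φ hφ _ _ (hidA x _ rfl)]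
      show eqToHom rfl ≫ (φ x ≫ eqToHom rfl ≫ Groupoid.inv (φ x)) ≫ eqToHom rfl = 𝟙 _
      simp [Fmap0_mkAA, Groupoid.inv_eq_inv]
    · obtain ⟨x, rfl⟩ := P.β_surj b
      rw [Fmap_spec P φ0 φ1 φ hφ _ _ (hidB x _ rfl)]
      show eqToHom rfl ≫ (Groupoid.inv (φ x) ≫ eqToHom rfl ≫ φ x) ≫ eqToHom rfl = 𝟙 _
      simp [Fmap0_mkBB, Groupoid.inv_eq_inv]
  · -- composition
    intro a b c f g
    show Fmap P φ0 φ1 φ hφ (str.comp f g)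
      = Fmap P φ0 φ1 φ hφ f ≫ Fmap P φ0 φ1 φ hφ g
    obtain ⟨vf, hf0, hf1⟩ := f
    obtain ⟨vg, hg0, hg1⟩ := g
    cases vf with
    | aa cf =>
      cases vg with
      | aa cg =>
        revert hf0 hf1 hg0 hg1
        induction cf using Quot.ind
        rename_i pf
        induction cg using Quot.ind
        rename_i pg
        obtain ⟨⟨x2, x1⟩, h12⟩ := pf
        obtain ⟨⟨x4, x3⟩, h34⟩ := pg
        intro hf0 hf1 hg0 hg1
        have h23 : P.α x2 = P.α x3 := Sum.inl.inj (hf1.trans hg0.symm)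
        have hu : P.β x4 = P.β (P.op x1 x2 x3 h12 h23) :=
          h34.trans (P.β_op x1 x2 x3 h12 h23).symm
        rw [Fmap_AA P φ0 φ1 φ hφ _ _ _ _
              (hAA a b c ⟨_, hf0, hf1⟩ ⟨_, hg0, hg1⟩ x1 x2 x3 x4 h12 h34 h23 hu rfl rfl) (by subst hf0; exact congrArg φ0 (P.α_op _ _ _ _ _).symm) (by subst hg1; rfl),
            Fmap_AA P φ0 φ1 φ hφ (⟨_, hf0, hf1⟩ : EnvHom P a b) x1 x2 h12 rfl (by subst hf0; rfl) (by subst hf1; rfl),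
            Fmap_AA P φ0 φ1 φ hφ (⟨_, hg0, hg1⟩ : EnvHom P b c) x3 x4 h34 rfl (by subst hg0; rfl) (by subst hg1; rfl)]
        simp [Fmap0_mkAA, hφ, Groupoid.inv_eq_inv, eqToHom_trans]
      | ab x3 =>
        revert hf0 hf1
        induction cf using Quot.ind
        rename_i pf
        obtain ⟨⟨x2, x1⟩, h12⟩ := pf
        intro hf0 hf1
        have h23 : P.α x2 = P.α x3 := Sum.inl.inj (hf1.trans hg0.symm)
        rw [Fmap_AB P φ0 φ1 φ hφ _ _
              (hAAB a b c ⟨_, hf0, hf1⟩ ⟨_, hg0, hg1⟩ x1 x2 x3 h12 h23 rfl rfl) (by subst hf0; exact congrArg φ0 (P.α_op _ _ _ _ _).symm) (by subst hg1; exact congrArg φ1 (P.β_op _ _ _ _ _)),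
            Fmap_AA P φ0 φ1 φ hφ (⟨_, hf0, hf1⟩ : EnvHom P a b) x1 x2 h12 rfl (by subst hf0; rfl) (by subst hf1; rfl),
            Fmap_AB P φ0 φ1 φ hφ (⟨_, hg0, hg1⟩ : EnvHom P b c) x3 rfl (by subst hg0; rfl) (by subst hg1; rfl)]
        simp [Fmap0_mkAA, Fmap0_mkAB, hφ, Groupoid.inv_eq_inv, eqToHom_trans]
      | ba x => exact nomatch hf1.trans hg0.symm
      | bb cg => exact nomatch hf1.trans hg0.symm
    | ab x1 =>
      cases vg with
      | ba x2 =>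
        have h21 : P.β x2 = P.β x1 := Sum.inr.inj (hg0.trans hf1.symm)
        rw [Fmap_AA P φ0 φ1 φ hφ _ _ _ _
              (hABA a b c ⟨_, hf0, hf1⟩ ⟨_, hg0, hg1⟩ x1 x2 h21 rfl rfl) (by subst hf0; rfl) (by subst hg1; rfl),
            Fmap_AB P φ0 φ1 φ hφ (⟨_, hf0, hf1⟩ : EnvHom P a b) x1 rfl (by subst hf0; rfl) (by subst hf1; rfl),
            Fmap_BA P φ0 φ1 φ hφ (⟨_, hg0, hg1⟩ : EnvHom P b c) x2 rfl (by subst hg0; rfl) (by subst hg1; rfl)]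
        simp [Fmap0_mkAA, Fmap0_mkAB, Fmap0_mkBA, Groupoid.inv_eq_inv, eqToHom_trans]
      | bb cg =>
        revert hg0 hg1
        induction cg using Quot.ind
        rename_i pg
        obtain ⟨⟨x2, x3⟩, h23⟩ := pg
        intro hg0 hg1
        have h12 : P.β x2 = P.β x1 := Sum.inr.inj (hg0.trans hf1.symm)
        rw [Fmap_AB P φ0 φ1 φ hφ _ _
              (hABB a b c ⟨_, hf0, hf1⟩ ⟨_, hg0, hg1⟩ x1 x2 x3 h12 h23 rfl rfl) (by subst hf0; exact congrArg φ0 (P.α_op _ _ _ _ _).symm) (by subst hg1; exact congrArg φ1 (P.β_op _ _ _ _ _)),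
            Fmap_AB P φ0 φ1 φ hφ (⟨_, hf0, hf1⟩ : EnvHom P a b) x1 rfl (by subst hf0; rfl) (by subst hf1; rfl),
            Fmap_BB P φ0 φ1 φ hφ (⟨_, hg0, hg1⟩ : EnvHom P b c) x2 x3 h23 rfl (by subst hg0; rfl) (by subst hg1; rfl)]
        simp [Fmap0_mkAB, Fmap0_mkBB, hφ, Groupoid.inv_eq_inv, eqToHom_trans]
      | aa cg => exact nomatch hf1.trans hg0.symm
      | ab x => exact nomatch hf1.trans hg0.symm
    | ba x3 =>
      cases vg with
      | aa cg =>
        revert hg0 hg1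
        induction cg using Quot.ind
        rename_i pg
        obtain ⟨⟨x1, x2⟩, h21⟩ := pg
        intro hg0 hg1
        have h23 : P.α x2 = P.α x3 := Sum.inl.inj (hg0.trans hf1.symm)
        rw [Fmap_BA P φ0 φ1 φ hφ _ _
              (hBAA a b c ⟨_, hf0, hf1⟩ ⟨_, hg0, hg1⟩ x1 x2 x3 h21.symm h23 rfl rfl) (by subst hf0; exact congrArg φ1 (P.β_op _ _ _ _ _).symm) (by subst hg1; exact congrArg φ0 (P.α_op _ _ _ _ _)),
            Fmap_BA P φ0 φ1 φ hφ (⟨_, hf0, hf1⟩ : EnvHom P a b) x3 rfl (by subst hf0; rfl) (by subst hf1; rfl),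
            Fmap_AA P φ0 φ1 φ hφ (⟨_, hg0, hg1⟩ : EnvHom P b c)
              x2 x1 h21 rfl (by subst hg0; rfl) (by subst hg1; rfl)]
        simp [Fmap0_mkAA, Fmap0_mkBA, hφ, Groupoid.inv_eq_inv, eqToHom_trans]
      | ab x3' =>
        have h23 : P.α x3 = P.α x3' := Sum.inl.inj (hf1.trans hg0.symm)
        rw [Fmap_BB P φ0 φ1 φ hφ _ _ _ _
              (hBAB a b c ⟨_, hf0, hf1⟩ ⟨_, hg0, hg1⟩ x3 x3' h23 rfl rfl) (by subst hf0; rfl) (by subst hg1; rfl),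
            Fmap_BA P φ0 φ1 φ hφ (⟨_, hf0, hf1⟩ : EnvHom P a b) x3 rfl (by subst hf0; rfl) (by subst hf1; rfl),
            Fmap_AB P φ0 φ1 φ hφ (⟨_, hg0, hg1⟩ : EnvHom P b c) x3' rfl (by subst hg0; rfl) (by subst hg1; rfl)]
        simp [Fmap0_mkBA, Fmap0_mkAB, Fmap0_mkBB, Groupoid.inv_eq_inv, eqToHom_trans]
      | ba x => exact nomatch hf1.trans hg0.symm
      | bb cg => exact nomatch hf1.trans hg0.symm
    | bb cf =>
      cases vg with
      | ba x1 =>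
        revert hf0 hf1
        induction cf using Quot.ind
        rename_i pf
        obtain ⟨⟨x3, x2⟩, h32⟩ := pf
        intro hf0 hf1
        have h12 : P.β x2 = P.β x1 := Sum.inr.inj (hf1.trans hg0.symm)
        rw [Fmap_BA P φ0 φ1 φ hφ _ _
              (hBBA a b c ⟨_, hf0, hf1⟩ ⟨_, hg0, hg1⟩ x1 x2 x3 h12 h32.symm rfl rfl) (by subst hf0; exact congrArg φ1 (P.β_op _ _ _ _ _).symm) (by subst hg1; exact congrArg φ0 (P.α_op _ _ _ _ _)),
            Fmap_BB P φ0 φ1 φ hφ (⟨_, hf0, hf1⟩ : EnvHom P a b) x3 x2 h32 rfl (by subst hf0; rfl) (by subst hf1; rfl),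
            Fmap_BA P φ0 φ1 φ hφ (⟨_, hg0, hg1⟩ : EnvHom P b c) x1 rfl (by subst hg0; rfl) (by subst hg1; rfl)]
        simp [Fmap0_mkBB, Fmap0_mkBA, hφ, Groupoid.inv_eq_inv, eqToHom_trans]
      | bb cg =>
        revert hf0 hf1 hg0 hg1
        induction cf using Quot.ind
        rename_i pf
        induction cg using Quot.ind
        rename_i pg
        obtain ⟨⟨x2, x3⟩, h23⟩ := pf
        obtain ⟨⟨x4, x5⟩, h45⟩ := pg
        intro hf0 hf1 hg0 hg1
        have h43 : P.β x4 = P.β x3 := Sum.inr.inj (hg0.trans hf1.symm)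
        have hq : P.α x2 = P.α (P.op x3 x4 x5 h43 h45) :=
          h23.trans (P.α_op x3 x4 x5 h43 h45).symm
        rw [Fmap_BB P φ0 φ1 φ hφ _ _ _ _
              (hBB2 a b c ⟨_, hf0, hf1⟩ ⟨_, hg0, hg1⟩ x2 x3 x4 x5 h23 h43 h45 hq rfl rfl) (by subst hf0; rfl) (by subst hg1; exact congrArg φ1 (P.β_op _ _ _ _ _)),
            Fmap_BB P φ0 φ1 φ hφ (⟨_, hf0, hf1⟩ : EnvHom P a b) x2 x3 h23 rfl (by subst hf0; rfl) (by subst hf1; rfl),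
            Fmap_BB P φ0 φ1 φ hφ (⟨_, hg0, hg1⟩ : EnvHom P b c) x4 x5 h45 rfl (by subst hg0; rfl) (by subst hg1; rfl)]
        simp [Fmap0_mkBB, hφ, Groupoid.inv_eq_inv, eqToHom_trans]
      | aa cg => exact nomatch hf1.trans hg0.symm
      | ab x => exact nomatch hf1.trans hg0.symm
  · -- uniqueness
    rintro ⟨o, m, mi, mc⟩ ⟨h1, h2, h3, h4, h5, h6⟩
    obtain rfl : o = Sum.elim φ0 φ1 := by
      funext ab
      rcases ab with a | b
      · exact h1 a
      · exact h2 b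
    have hm : ∀ (a b : A ⊕ B) (f : EnvHom P a b),
        m f = Fmap P φ0 φ1 φ hφ f := by
      intro a b f
      obtain ⟨v, hv0, hv1⟩ := f
      cases v with
      | ab x =>
        subst hv0; subst hv1
        exact (eq_of_heq (h3 x)).trans (keyAB x).symm
      | ba x =>
        subst hv0; subst hv1
        exact (eq_of_heq (h4 x)).trans (keyBA x).symm
      | aa cv =>
        revert hv0 hv1
        induction cv using Quot.ind
        rename_i pv
        obtain ⟨⟨x, y⟩, h⟩ := pv
        intro hv0 hv1
        subst hv0; subst hv1
        exact (eq_of_heq (h5 y x h)).trans (keyAA y x h).symm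
      | bb cv =>
        revert hv0 hv1
        induction cv using Quot.ind
        rename_i pv
        obtain ⟨⟨x, z⟩, h⟩ := pv
        intro hv0 hv1
        subst hv0; subst hv1
        exact (eq_of_heq (h6 x z h)).trans (keyBB x z h).symm
    obtain rfl : @m = @(fun {a b} (f : EnvHom P a b) => Fmap P φ0 φ1 φ hφ f) := by
      funext a b f
      exact hm a b f
    rfl

end Kock
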